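/- Let G be a ρ-uniform irreducible positively recurrent stochastic graph and φ : G → I a homomorphism onto the Bernoulli graph. Then there exists a set F ⊆ X_G with m_G(F) = 1 such that whenever x = (x_n)_n and y = (y_n)_n belong to F, t(x₁) = t(y₁), and φ(x_n) = φ(y_n) for all n ∈ ℕ, one has x = y. (Equivalently: ζ⁰_G ∨ δ_φ^{(∞)} = ε, i.e. a.e. point of X_G is determined modulo 0 by the terminal vertex of its first edge together with its φ-itinerary.) -/

import Mathlib

open MeasureTheory
open scoped ENNReal Classical

namespace OneSidedMarkov

noncomputable section

/-- The canonical σ-algebra on a sequence space over a (countable) alphabet: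
the product of the discrete σ-algebras on the coordinates. -/
instance seqMS (E : Type*) : MeasurableSpace (ℕ → E) :=
  @MeasurableSpace.pi ℕ (fun _ => E) fun _ => ⊤

/-- Measurability of a map into a (countable) set carrying the discrete σ-algebra. -/
def DMeasurable {X : Type*} [MeasurableSpace X] {A : Type*} (f : X → A) : Prop :=
  ∀ a : A, MeasurableSet (f ⁻¹' {a})

/-- The cylinder set determined by a finite word. -/
def cyl {E : Type*} {n : ℕ} (g : Fin n → E) : Set (ℕ → E) :=
  {x | ∀ k : Fin n, x (k : ℕ) = g k}

/-- The one-sided shift on a sequence space. -/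
def shift {E : Type*} (x : ℕ → E) : ℕ → E := fun n => x (n + 1)

/-- `ρ` is a strictly positive probability vector. -/
def IsProbVector {I : Type*} (ρ : I → ℝ≥0∞) : Prop :=
  (∀ i, 0 < ρ i) ∧ ∑' i, ρ i = 1

/-- `μ` is the Bernoulli (product) measure with marginal `ρ`. -/
def IsProductMeasure {I : Type*} (ρ : I → ℝ≥0∞) (μ : Measure (ℕ → I)) : Prop :=
  IsProbabilityMeasure μ ∧ ∀ (n : ℕ) (w : Fin n → I), μ (cyl w) = ∏ k, ρ (w k)

/-- Isomorphism mod 0 of two measure-preserving systems: a measure-preserving map,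
invertible after discarding null sets, intertwining the transformations a.e. -/
def IsomorphicMod0 {X Y : Type*} [MeasurableSpace X] [MeasurableSpace Y]
    (μ : Measure X) (T : X → X) (ν : Measure Y) (S : Y → Y) : Prop :=
  ∃ Φ : X → Y, MeasurePreserving Φ μ ν ∧ (∀ᵐ x ∂μ, Φ (T x) = S (Φ x)) ∧
    ∃ Ψ : Y → X, MeasurePreserving Ψ ν μ ∧
      (∀ᵐ x ∂μ, Ψ (Φ x) = x) ∧ ∀ᵐ y ∂ν, Φ (Ψ y) = y

/-! ### Stochastic graphs -/

/-- The data of a weighted directed graph: edge set `E`, vertex set `V`,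
source and target maps, and weights on edges. -/
structure PreGraph (E V : Type*) where
  s : E → V
  t : E → V
  p : E → ℝ≥0∞

variable {E V F W : Type*}

namespace PreGraph

/-- A weighted directed graph is stochastic if weights are positive, the weights of the
edges starting at any given vertex sum to `1`, and every vertex has an outgoing and
an incoming edge. -/
def IsStochastic (G : PreGraph E V) : Prop :=
  (∀ g, 0 < G.p g) ∧ (∀ u : V, ∑' g : {g : E // G.s g = u}, G.p g.1 = 1) ∧
    (∀ u : V, ∃ g, G.s g = u) ∧ ∀ v : V, ∃ g, G.t g = v

/-- `p0` is a stationary probability on the vertices of `G`. -/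
def IsStationary (G : PreGraph E V) (p0 : V → ℝ≥0∞) : Prop :=
  (∀ u, 0 < p0 u) ∧ ∑' u, p0 u = 1 ∧
    ∀ v : V, ∑' g : {g : E // G.t g = v}, G.p g.1 * p0 (G.s g.1) = p0 v

/-- `G` is positively recurrent iff a stationary probability exists. -/
def PositivelyRecurrent (G : PreGraph E V) : Prop := ∃ p0, G.IsStationary p0

/-- One-step reachability along a directed edge. -/
def Step (G : PreGraph E V) (u v : V) : Prop := ∃ g, G.s g = u ∧ G.t g = v

/-- `G` is irreducible: any ordered pair of vertices is joined by a finite directed path. -/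
protected def Irreducible (G : PreGraph E V) : Prop :=
  ∀ u v : V, Relation.ReflTransGen G.Step u v

/-- The (backward) path condition for finite words of edges:
`s (g k) = t (g (k+1))` for consecutive indices. -/
def IsPathW (G : PreGraph E V) {n : ℕ} (g : Fin n → E) : Prop :=
  ∀ (k : ℕ) (h : k + 1 < n), G.s (g ⟨k, Nat.lt_of_succ_lt h⟩) = G.t (g ⟨k + 1, h⟩)

/-- The set of admissible one-sided infinite (backward) paths. -/
def PathSet (G : PreGraph E V) : Set (ℕ → E) := {x | ∀ n, G.s (x n) = G.t (x (n + 1))}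

/-- `m` is the stationary Markov measure of `(G, p0)`, characterized by its values on
cylinder sets: the cylinder over a backward path `g₁ … gₙ` has mass
`p g₁ ⋯ p gₙ · p0 (s gₙ)`, and cylinders over non-paths are null. -/
def IsMarkovMeasure (G : PreGraph E V) (p0 : V → ℝ≥0∞) (m : Measure (ℕ → E)) : Prop :=
  IsProbabilityMeasure m ∧
    ∀ (n : ℕ) (g : Fin (n + 1) → E),
      m (cyl g) =
        if G.IsPathW g then (∏ k, G.p (g k)) * p0 (G.s (g (Fin.last n))) else 0

end PreGraph

/-- A (weight-preserving, deterministic) homomorphism of weighted directed graphs. -/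
structure GraphHom (G : PreGraph E V) (H : PreGraph F W) where
  toFun : E → F
  vFun : V → W
  map_s : ∀ g, H.s (toFun g) = vFun (G.s g)
  map_t : ∀ g, H.t (toFun g) = vFun (G.t g)
  map_p : ∀ g, H.p (toFun g) = G.p g
  v_surj : Function.Surjective vFun
  deterministic : ∀ (u : V) (h : F), H.s h = vFun u → ∃! g : E, G.s g = u ∧ toFun g = h

namespace GraphHom

variable {G : PreGraph E V} {H : PreGraph F W}

/-- The factor map induced on path spaces by a graph homomorphism. -/
def pathMap (φ : GraphHom G H) (x : ℕ → E) : ℕ → F := fun n => φ.toFun (x n)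

/-- `φ` has degree `d` (with respect to the Markov measure `m` on the source):
almost every fiber of the induced factor map, within the path space, has exactly
`d` elements. -/
def HasDegree (φ : GraphHom G H) (m : Measure (ℕ → E)) (d : ℕ) : Prop :=
  ∀ᵐ x ∂m, (G.PathSet ∩ φ.pathMap ⁻¹' {φ.pathMap x}).Finite ∧
    (G.PathSet ∩ φ.pathMap ⁻¹' {φ.pathMap x}).ncard = d

/-- A homomorphism is an isomorphism of graphs if it is bijective on edges and
on vertices. -/
def IsIso (φ : GraphHom G H) : Prop :=
  Function.Bijective φ.toFun ∧ Function.Bijective φ.vFun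

end GraphHom

/-- The standard Bernoulli graph: a single vertex, edge set `I` with weights `ρ`. -/
def bernoulliGraph {I : Type*} (ρ : I → ℝ≥0∞) : PreGraph I Unit :=
  ⟨fun _ => (), fun _ => (), ρ⟩

/-- The graph skew product `H̄ₐ` of `H` by a function `a` into the permutations of
`Fin d`. -/
def gsp (H : PreGraph F W) {d : ℕ} (a : F → Equiv.Perm (Fin d)) :
    PreGraph (F × Fin d) (W × Fin d) where
  s := fun hy => (H.s hy.1, hy.2)
  t := fun hy => (H.t hy.1, a hy.1 hy.2)
  p := fun hy => H.p hy.1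

/-- Two functions `a₁ a₂ : H → 𝒜_d` are cohomologous with respect to `H`. -/
def Cohomologous (H : PreGraph F W) {d : ℕ} (a₁ a₂ : F → Equiv.Perm (Fin d)) : Prop :=
  ∃ w : W → Equiv.Perm (Fin d), ∀ h, a₂ h * w (H.s h) = w (H.t h) * a₁ h

/-- The map `fᵢ : G⁰ → G⁰` induced by a homomorphism onto the Bernoulli graph:
`fᵢ u` is the target of the unique edge starting at `u` sent to `i`. -/
def GraphHom.fmap {I : Type*} {G : PreGraph E V} {ρ : I → ℝ≥0∞}
    (φ : GraphHom G (bernoulliGraph ρ)) (i : I) (u : V) : V :=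
  G.t (φ.deterministic u i (Subsingleton.elim _ _)).exists.choose

/-- Composite of the maps determined by a finite word. -/
def compWord {U I : Type*} (f : I → U → U) {n : ℕ} (w : Fin n → I) : U → U :=
  (List.ofFn fun k => f (w k)).foldr (· ∘ ·) id

/-- The semigroup (set of all nonempty finite composites) generated by a family of
self-maps. -/
def genSem {U I : Type*} (f : I → U → U) : Set (U → U) :=
  {g | ∃ (n : ℕ) (w : Fin (n + 1) → I), g = compWord f w}

/-- `L` is a persistent `d`-set for the semigroup `S` of self-maps of `U`. -/
def PersistentSet {U : Type*} (S : Set (U → U)) (d : ℕ) (L : Set U) : Prop :=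
  L.Finite ∧ L.ncard = d ∧ (∀ f ∈ S, (f '' L).ncard = d) ∧
    ∀ A : Set U, A.Finite → ∃ f ∈ S, f '' A ⊆ L

/-- The semigroup `S` is `d`-contractive. -/
def IsDContractive {U : Type*} (S : Set (U → U)) (d : ℕ) : Prop :=
  ∃ L, PersistentSet S d L

/-- The itinerary (canonical factor) map of an endomorphism `T` relative to `δ`. -/
def itin {X I : Type*} (T : X → X) (δ : X → I) (x : X) : ℕ → I := fun n => δ (T^[n] x)

/-- `δ ∈ Δ_ρ(T)`: `δ` has law `ρ`, the σ-algebra generated by `δ` is independent of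
`T⁻¹𝓑`, and together they generate the whole σ-algebra modulo null sets. -/
def IsUniformGenerator {X : Type*} [mX : MeasurableSpace X] {I : Type*} (ρ : I → ℝ≥0∞)
    (m : Measure X) (T : X → X) (δ : X → I) : Prop :=
  DMeasurable δ ∧ (∀ i, m (δ ⁻¹' {i}) = ρ i) ∧
    ProbabilityTheory.Indep (MeasurableSpace.comap δ ⊤) (mX.comap T) m ∧
    ∀ A : Set X, MeasurableSet A →
      ∃ B : Set X, MeasurableSet[MeasurableSpace.comap δ ⊤ ⊔ mX.comap T] B ∧
        m (symmDiff A B) = 0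

/-- The fibers of `Φ` have cardinality `d ∈ ℕ∞` almost everywhere. -/
def HasFiberCard {X : Type*} [MeasurableSpace X] {I : Type*} (m : Measure X)
    (Φ : X → ℕ → I) (d : ℕ∞) : Prop :=
  ∀ᵐ x ∂m, (Φ ⁻¹' {Φ x}).encard = d

/-- `d` is the minimal index `d(T)` of the `ρ`-uniform endomorphism `T`. -/
def HasMinimalIndex {X : Type*} [MeasurableSpace X] {I : Type*} (ρ : I → ℝ≥0∞)
    (m : Measure X) (T : X → X) (d : ℕ∞) : Prop :=
  (∃ δ : X → I, IsUniformGenerator ρ m T δ ∧ HasFiberCard m (itin T δ) d) ∧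
    ∀ (δ : X → I) (d' : ℕ∞),
      IsUniformGenerator ρ m T δ → HasFiberCard m (itin T δ) d' → d ≤ d'

/-- The uniform probability measure on `Fin d`. -/
def unif (d : ℕ) : Measure (Fin d) := (d : ℝ≥0∞)⁻¹ • Measure.count

/-- The `n`-stringing graph `G⁽ⁿ⁾`: edges are the backward paths of length `n+1`,
vertices the backward paths of length `n`. -/
def stringing (G : PreGraph E V) (n : ℕ) :
    PreGraph {g : Fin (n + 1) → E // G.IsPathW g} {g : Fin n → E // G.IsPathW g} where
  s := fun g => ⟨fun k => g.1 k.succ, fun k h => g.2 (k + 1) (Nat.succ_lt_succ h)⟩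
  t := fun g => ⟨fun k => g.1 k.castSucc, fun k h => g.2 k (Nat.lt_succ_of_lt h)⟩
  p := fun g => ∏ k, G.p (g.1 k)

/-- A `(π,ψ)`-extension in `Ext^d(I,ρ)`: a graph skew product `d`-extension
`H̄ₐ → H` of a positively recurrent graph `H` admitting a degree-one homomorphism
`ψ : H → I` onto the Bernoulli graph, with `H̄ₐ` irreducible. -/
structure PiPsiExt (I : Type) (ρ : I → ℝ≥0∞) (d : ℕ) where
  F : Type
  W : Type
  countF : Countable F
  countW : Countable W
  H : PreGraph F W
  stoch : H.IsStochastic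
  a : F → Equiv.Perm (Fin d)
  ψ : GraphHom H (bernoulliGraph ρ)
  p0 : W → ℝ≥0∞
  stat : H.IsStationary p0
  m : Measure (ℕ → F)
  markov : H.IsMarkovMeasure p0 m
  deg1 : ψ.HasDegree m 1
  irr : (gsp H a).Irreducible

/-- The partial order on `Ext^d(I,ρ)`: `P₁ ≼ P` via homomorphisms `κ, κ̄` making the
diagram commute, with `a₁ ∘ κ` cohomologous to `a`. -/
def ExtLE {I : Type} {ρ : I → ℝ≥0∞} {d : ℕ} (P₁ P : PiPsiExt I ρ d) : Prop :=
  ∃ (κ : GraphHom P.H P₁.H) (κb : GraphHom (gsp P.H P.a) (gsp P₁.H P₁.a)),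
    (∀ g : P.F × Fin d, (κb.toFun g).1 = κ.toFun g.1) ∧
    (∀ g : P.F, P.ψ.toFun g = P₁.ψ.toFun (κ.toFun g)) ∧
    Cohomologous P.H P.a (fun h => P₁.a (κ.toFun h))

/-- Equivalence of `(π,ψ)`-extensions: as `ExtLE` but with `κ, κ̄` isomorphisms. -/
def ExtEquiv {I : Type} {ρ : I → ℝ≥0∞} {d : ℕ} (P₁ P : PiPsiExt I ρ d) : Prop :=
  ∃ (κ : GraphHom P.H P₁.H) (κb : GraphHom (gsp P.H P.a) (gsp P₁.H P₁.a)),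
    κ.IsIso ∧ κb.IsIso ∧
    (∀ g : P.F × Fin d, (κb.toFun g).1 = κ.toFun g.1) ∧
    (∀ g : P.F, P.ψ.toFun g = P₁.ψ.toFun (κ.toFun g)) ∧
    Cohomologous P.H P.a (fun h => P₁.a (κ.toFun h))

/-- An irreducible element of `(Ext^d(I,ρ), ≼)`. -/
def ExtIrreducible {I : Type} {ρ : I → ℝ≥0∞} {d : ℕ} (P : PiPsiExt I ρ d) : Prop :=
  ∀ P₁ : PiPsiExt I ρ d, ExtLE P₁ P → ExtEquiv P₁ P

end

end OneSidedMarkov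

namespace OneSidedMarkov

open MeasureTheory
open scoped ENNReal


open MeasureTheory Filter
open scoped ENNReal

section Aux

variable {E V I : Type} [Countable E] [Countable V] [Countable I] [Nontrivial I]

/-! ### Measurability on the sequence space -/

lemma measurable_eval' (n : ℕ) :
    @Measurable (ℕ → E) E (seqMS E) ⊤ (fun x : ℕ → E => x n) :=
  @measurable_pi_apply ℕ (fun _ : ℕ => E) (fun _ => ⊤) n

lemma measurableSet_coord (n : ℕ) (A : Set E) :
    MeasurableSet {x : ℕ → E | x n ∈ A} :=
  measurable_eval' n (MeasurableSpace.measurableSet_top (s := A))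

lemma measurableSet_cyl {n : ℕ} (g : Fin n → E) : MeasurableSet (cyl g) := by
  have : cyl g = ⋂ k : Fin n, {x : ℕ → E | x (k : ℕ) ∈ ({g k} : Set E)} := by
    ext x; simp [cyl]
  rw [this]
  exact MeasurableSet.iInter fun k => measurableSet_coord _ _

/-- The family of (positive-length) cylinder sets. -/
def Cyls (E : Type) : Set (Set (ℕ → E)) :=
  {S | ∃ (n : ℕ) (g : Fin (n + 1) → E), S = cyl g}

lemma cyl_inter_of_le {n₁ n₂ : ℕ} (g : Fin (n₁+1) → E) (h : Fin (n₂+1) → E)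
    (hle : n₁ ≤ n₂) (hne : (cyl g ∩ cyl h).Nonempty) : cyl g ∩ cyl h = cyl h := by
  obtain ⟨x, hxg, hxh⟩ := hne
  apply Set.inter_eq_self_of_subset_right
  intro z hz k
  have hk2 : (k : ℕ) < n₂ + 1 := lt_of_lt_of_le k.isLt (by omega)
  have h1 : x (k : ℕ) = g k := hxg k
  have h2 : x (k : ℕ) = h ⟨k, hk2⟩ := hxh ⟨k, hk2⟩
  have h3 : z (k : ℕ) = h ⟨k, hk2⟩ := hz ⟨k, hk2⟩
  rw [h3, ← h2, h1]

lemma isPiSystem_Cyls : IsPiSystem (Cyls E) := by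
  rintro S1 ⟨n₁, g, rfl⟩ S2 ⟨n₂, h, rfl⟩ hne
  rcases le_total n₁ n₂ with hle | hle
  · rw [cyl_inter_of_le g h hle hne]; exact ⟨n₂, h, rfl⟩
  · rw [Set.inter_comm] at hne ⊢
    rw [cyl_inter_of_le h g hle hne]
    exact ⟨n₁, g, rfl⟩

lemma coord_eq_union_cyl (n : ℕ) (e : E) :
    {x : ℕ → E | x n = e} =
      ⋃ g : {g : Fin (n+1) → E // g (Fin.last n) = e}, cyl g.1 := by
  ext x
  constructor
  · intro hx
    exact Set.mem_iUnion.2 ⟨⟨fun k => x k, hx⟩, fun k => rfl⟩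
  · intro hx
    obtain ⟨g, hg⟩ := Set.mem_iUnion.1 hx
    have h1 := hg (Fin.last n)
    simp only [Fin.val_last] at h1
    rw [Set.mem_setOf_eq, h1, g.2]

lemma seqMS_eq_generateFrom : (seqMS E) = MeasurableSpace.generateFrom (Cyls E) := by
  apply le_antisymm
  · show (⨆ n : ℕ, MeasurableSpace.comap (fun x : ℕ → E => x n) ⊤) ≤ _
    refine iSup_le fun n => ?_
    rw [MeasurableSpace.le_def]
    rintro s hs
    obtain ⟨t, -, rfl⟩ := hs
    have ht : (fun x : ℕ → E => x n) ⁻¹' t = ⋃ e : t, {x : ℕ → E | x n = (e : E)} := by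
      ext x; simp [Set.mem_iUnion]
    rw [ht]
    refine MeasurableSet.iUnion fun e => ?_
    rw [coord_eq_union_cyl]
    exact MeasurableSet.iUnion fun g =>
      MeasurableSpace.measurableSet_generateFrom ⟨n, g.1, rfl⟩
  · exact MeasurableSpace.generateFrom_le (by rintro S ⟨n, g, rfl⟩; exact measurableSet_cyl g)

lemma shift_measurable : Measurable (shift : (ℕ → E) → (ℕ → E)) :=
  (@measurable_pi_iff (ℕ → E) ℕ (fun _ => E) (seqMS E) (fun _ => ⊤)
    (shift : (ℕ → E) → (ℕ → E))).2 fun n => measurable_eval' (n+1)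

lemma shift_iterate (n : ℕ) (x : ℕ → E) (k : ℕ) : (shift^[n] x) k = x (k + n) := by
  induction n generalizing x k with
  | zero => rfl
  | succ n ih =>
    rw [Function.iterate_succ_apply, ih]
    rfl


end Aux


section Aux2

open MeasureTheory Filter
open scoped ENNReal

variable {E V I : Type} [Countable E] [Countable V] [Countable I] [Nontrivial I]
variable (G : PreGraph E V) (ρ : I → ℝ≥0∞) (φ : GraphHom G (bernoulliGraph ρ))

/-! ### The unique edge with a given source and label -/

noncomputable def theEdge (u : V) (i : I) : E :=
  (φ.deterministic u i (Subsingleton.elim _ _)).exists.choose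

lemma theEdge_spec (u : V) (i : I) :
    G.s (theEdge G ρ φ u i) = u ∧ φ.toFun (theEdge G ρ φ u i) = i :=
  (φ.deterministic u i (Subsingleton.elim _ _)).exists.choose_spec

lemma theEdge_unique {u : V} {i : I} {g : E} (h1 : G.s g = u) (h2 : φ.toFun g = i) :
    g = theEdge G ρ φ u i :=
  (φ.deterministic u i (Subsingleton.elim _ _)).unique ⟨h1, h2⟩ (theEdge_spec G ρ φ u i)

noncomputable def fV (i : I) (u : V) : V := G.t (theEdge G ρ φ u i)

lemma p_theEdge (u : V) (i : I) : G.p (theEdge G ρ φ u i) = ρ i := by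
  have h := (φ.map_p (theEdge G ρ φ u i)).symm
  rw [(theEdge_spec G ρ φ u i).2] at h
  exact h

/-- For a path, each edge is determined by its source (the target of the next edge)
and its label. -/
lemma path_coherent {x : ℕ → E} (hx : x ∈ G.PathSet) (k : ℕ) :
    x k = theEdge G ρ φ (G.t (x (k+1))) (φ.toFun (x k)) :=
  theEdge_unique G ρ φ (hx k) rfl

lemma t_coherent {x : ℕ → E} (hx : x ∈ G.PathSet) (k : ℕ) :
    G.t (x k) = fV G ρ φ (φ.toFun (x k)) (G.t (x (k+1))) := by
  conv_lhs => rw [path_coherent G ρ φ hx k]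
  rfl

/-! ### Vertex chains driven by a word -/

noncomputable def uchain (σ : ℕ → I) (u : V) : ℕ → V
  | 0 => u
  | (j+1) => fV G ρ φ (σ j) (uchain σ u j)

lemma uchain_congr {σ σ' : ℕ → I} (u : V) {k : ℕ} (h : ∀ j < k, σ j = σ' j) :
    uchain G ρ φ σ u k = uchain G ρ φ σ' u k := by
  induction k with
  | zero => rfl
  | succ k ih =>
    simp only [uchain]
    rw [ih (fun j hj => h j (by omega)), h k (by omega)]

lemma uchain_shift (σ : ℕ → I) (u : V) (j : ℕ) :
    uchain G ρ φ σ u (j+1) = uchain G ρ φ (fun k => σ (k+1)) (fV G ρ φ (σ 0) u) j := by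
  induction j with
  | zero => rfl
  | succ j ih =>
    show fV G ρ φ (σ (j+1)) (uchain G ρ φ σ u (j+1)) = _
    rw [ih]
    rfl

/-- The pair of chains started at `u` and `a` are distinct at all times `< n` and
merge at time `n`. -/
def Merge (σ : ℕ → I) (u a : V) (n : ℕ) : Prop :=
  (∀ j < n, uchain G ρ φ σ u j ≠ uchain G ρ φ σ a j) ∧
    uchain G ρ φ σ u n = uchain G ρ φ σ a n

/-- Extension of a finite word to an infinite one. -/
noncomputable def wext {n : ℕ} (w : Fin n → I) : ℕ → I :=
  fun j => if h : j < n then w ⟨j, h⟩ else Classical.arbitrary I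

lemma wext_lt {n : ℕ} (w : Fin n → I) {j : ℕ} (h : j < n) : wext w j = w ⟨j, h⟩ :=
  dif_pos h

/-- The total `ρ`-weight of the words of length `n` whose pair of chains from `(u, a)`
first merges exactly at time `n`. -/
noncomputable def Aw (a u : V) (n : ℕ) : ℝ≥0∞ :=
  ∑' w : Fin n → I, if Merge G ρ φ (wext w) u a n then ∏ j, ρ (w j) else 0

lemma A_zero (a u : V) : Aw G ρ φ a u 0 = if u = a then 1 else 0 := by
  rw [Aw, tsum_eq_single (default : Fin 0 → I)
    (fun b hb => (hb (Subsingleton.elim b default)).elim)]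
  by_cases h : u = a
  · rw [if_pos, if_pos h]
    · simp
    · exact ⟨fun j hj => absurd hj (Nat.not_lt_zero j), h⟩
  · rw [if_neg, if_neg h]
    exact fun hM => h hM.2

lemma wext_cons_zero {n : ℕ} (i : I) (w : Fin n → I) : wext (Fin.cons i w) 0 = i := by
  rw [wext_lt (Fin.cons i w) (Nat.succ_pos n)]
  simp

lemma wext_cons_succ {n : ℕ} (i : I) (w : Fin n → I) (j : ℕ) :
    wext (Fin.cons i w) (j+1) = wext w j := by
  by_cases h : j < n
  · rw [wext_lt (Fin.cons i w) (by omega : j + 1 < n + 1), wext_lt w h]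
    rw [show (⟨j+1, by omega⟩ : Fin (n+1)) = Fin.succ ⟨j, h⟩ from rfl, Fin.cons_succ]
  · rw [wext, wext, dif_neg (by omega), dif_neg h]

lemma uchain_wext_cons {n : ℕ} (i : I) (w : Fin n → I) (u : V) (j : ℕ) (hj : j ≤ n) :
    uchain G ρ φ (wext (Fin.cons i w)) u (j+1)
      = uchain G ρ φ (wext w) (fV G ρ φ i u) j := by
  rw [uchain_shift, wext_cons_zero]
  exact uchain_congr G ρ φ _ (fun k hk => wext_cons_succ i w k)

lemma Merge_succ {n : ℕ} (i : I) (w : Fin n → I) (u a : V) :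
    Merge G ρ φ (wext (Fin.cons i w)) u a (n+1) ↔
      u ≠ a ∧ Merge G ρ φ (wext w) (fV G ρ φ i u) (fV G ρ φ i a) n := by
  constructor
  · rintro ⟨hne, heq⟩
    refine ⟨hne 0 (Nat.succ_pos n), ⟨fun j hj => ?_, ?_⟩⟩
    · have := hne (j+1) (by omega)
      rwa [uchain_wext_cons G ρ φ i w u j (by omega),
        uchain_wext_cons G ρ φ i w a j (by omega)] at this
    · rw [← uchain_wext_cons G ρ φ i w u n le_rfl,
        ← uchain_wext_cons G ρ φ i w a n le_rfl]
      exact heq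
  · rintro ⟨hua, hne, heq⟩
    constructor
    · intro j hj
      match j with
      | 0 => exact hua
      | (j+1) =>
        rw [uchain_wext_cons G ρ φ i w u j (by omega),
          uchain_wext_cons G ρ φ i w a j (by omega)]
        exact hne j (by omega)
    · rw [uchain_wext_cons G ρ φ i w u n le_rfl,
        uchain_wext_cons G ρ φ i w a n le_rfl]
      exact heq

lemma A_succ (a u : V) (n : ℕ) :
    Aw G ρ φ a u (n+1) =
      if u = a then 0
      else ∑' i : I, ρ i * Aw G ρ φ (fV G ρ φ i a) (fV G ρ φ i u) n := by
  rw [Aw, ← (Fin.consEquiv (fun _ : Fin (n+1) => I)).tsum_eq, ENNReal.tsum_prod']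
  by_cases h : u = a
  · rw [if_pos h]
    refine ENNReal.tsum_eq_zero.2 fun i => ENNReal.tsum_eq_zero.2 fun w => ?_
    rw [if_neg]
    intro hM
    exact ((Merge_succ G ρ φ i w u a).1 hM).1 h
  · rw [if_neg h]
    congr 1
    funext i
    rw [Aw, ← ENNReal.tsum_mul_left]
    congr 1
    funext w
    show (if Merge G ρ φ (wext ((Fin.cons i w : Fin (n+1) → I))) u a (n+1)
        then ∏ j : Fin (n+1), ρ ((Fin.cons i w : Fin (n+1) → I) j) else 0) = _
    rw [Fin.prod_univ_succ]
    simp only [Fin.cons_zero, Fin.cons_succ]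
    by_cases hM : Merge G ρ φ (wext w) (fV G ρ φ i u) (fV G ρ φ i a) n
    · rw [if_pos ((Merge_succ G ρ φ i w u a).2 ⟨h, hM⟩), if_pos hM]
    · rw [if_neg (fun hc => hM ((Merge_succ G ρ φ i w u a).1 hc).2), if_neg hM, mul_zero]

lemma A_sum_le (hρ1 : ∑' i : I, ρ i = 1) (L : ℕ) :
    ∀ u a : V, ∑ ℓ ∈ Finset.range (L+1), Aw G ρ φ a u ℓ ≤ 1 := by
  induction L with
  | zero =>
    intro u a
    rw [Finset.sum_range_one, A_zero]
    split <;> simp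
  | succ L ih =>
    intro u a
    rw [Finset.sum_range_succ']
    by_cases h : u = a
    · have h1 : ∀ ℓ : ℕ, Aw G ρ φ a u (ℓ+1) = 0 := fun ℓ => by
        rw [A_succ, if_pos h]
      simp only [h1, Finset.sum_const_zero, zero_add, A_zero, if_pos h]
      exact le_rfl
    · rw [A_zero, if_neg h, add_zero]
      have h2 : ∀ ℓ ∈ Finset.range (L+1), Aw G ρ φ a u (ℓ+1)
          = ∑' i : I, ρ i * Aw G ρ φ (fV G ρ φ i a) (fV G ρ φ i u) ℓ :=
        fun ℓ _ => by rw [A_succ, if_neg h]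
      rw [Finset.sum_congr rfl h2, ← Summable.tsum_finsetSum (fun ℓ _ => ENNReal.summable)]
      calc ∑' i : I, ∑ ℓ ∈ Finset.range (L+1), ρ i * Aw G ρ φ (fV G ρ φ i a) (fV G ρ φ i u) ℓ
          = ∑' i : I, ρ i * ∑ ℓ ∈ Finset.range (L+1), Aw G ρ φ (fV G ρ φ i a) (fV G ρ φ i u) ℓ := by
            congr 1; funext i; rw [Finset.mul_sum]
        _ ≤ ∑' i : I, ρ i * 1 :=
            ENNReal.tsum_le_tsum fun i => mul_le_mul_right (ih _ _) _
        _ = 1 := by simpa using hρ1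

lemma A_tsum_le (hρ1 : ∑' i : I, ρ i = 1) (u a : V) : ∑' ℓ, Aw G ρ φ a u ℓ ≤ 1 :=
  ENNReal.tsum_le_of_sum_range_le fun L => by
    match L with
    | 0 => simp
    | (L+1) => exact A_sum_le G ρ φ hρ1 L u a

end Aux2


section Aux3

open MeasureTheory Filter
open scoped ENNReal

variable {E V I : Type} [Countable E] [Countable V] [Countable I] [Nontrivial I]
variable (G : PreGraph E V) (ρ : I → ℝ≥0∞) (φ : GraphHom G (bernoulliGraph ρ))

/-! ### The edge path generated by a word, read backwards -/

noncomputable def pword (ℓ : ℕ) (u : V) (w : Fin (ℓ+1) → I) : Fin (ℓ+1) → E :=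
  fun k => theEdge G ρ φ (uchain G ρ φ (wext w) u (ℓ - (k:ℕ))) (wext w (ℓ - (k:ℕ)))

lemma s_pword (ℓ : ℕ) (u : V) (w : Fin (ℓ+1) → I) (k : Fin (ℓ+1)) :
    G.s (pword G ρ φ ℓ u w k) = uchain G ρ φ (wext w) u (ℓ - (k:ℕ)) :=
  (theEdge_spec G ρ φ _ _).1

lemma phi_pword (ℓ : ℕ) (u : V) (w : Fin (ℓ+1) → I) (k : Fin (ℓ+1)) :
    φ.toFun (pword G ρ φ ℓ u w k) = wext w (ℓ - (k:ℕ)) :=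
  (theEdge_spec G ρ φ _ _).2

lemma t_pword (ℓ : ℕ) (u : V) (w : Fin (ℓ+1) → I) (k : Fin (ℓ+1)) :
    G.t (pword G ρ φ ℓ u w k) = uchain G ρ φ (wext w) u ((ℓ - (k:ℕ)) + 1) := rfl

lemma isPathW_pword (ℓ : ℕ) (u : V) (w : Fin (ℓ+1) → I) :
    G.IsPathW (pword G ρ φ ℓ u w) := by
  intro k hk
  rw [s_pword, t_pword]
  congr 1
  simp only [Fin.val_mk]
  omega

lemma m_cyl_pword (p0 : V → ℝ≥0∞) (m : Measure (ℕ → E)) (hm : G.IsMarkovMeasure p0 m)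
    (ℓ : ℕ) (u : V) (w : Fin (ℓ+1) → I) :
    m (cyl (pword G ρ φ ℓ u w)) = (∏ j, ρ (w j)) * p0 u := by
  rw [hm.2 ℓ _, if_pos (isPathW_pword G ρ φ ℓ u w)]
  congr 1
  · rw [show (∏ j, ρ (w j)) = ∏ k : Fin (ℓ+1), ρ (w (Fin.rev k)) from
      (Fintype.prod_equiv Fin.revPerm _ _ fun k => rfl).symm]
    refine Finset.prod_congr rfl fun k _ => ?_
    rw [pword, p_theEdge, wext_lt w (by omega : ℓ - (k:ℕ) < ℓ+1)]
    congr 2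
    ext
    simp only [Fin.val_mk, Fin.val_rev]
    omega
  · rw [s_pword]
    simp [Fin.val_last, Nat.sub_self]
    rfl

/-! ### The bad sets -/

noncomputable def SsetFn (a : V) (ℓ : ℕ) (P : V × (Fin (ℓ+1) → I)) : Set (ℕ → E) :=
  if Merge G ρ φ (wext P.2) P.1 a (ℓ+1) then cyl (pword G ρ φ ℓ P.1 P.2) else ∅

noncomputable def Sset (a : V) (ℓ : ℕ) : Set (ℕ → E) :=
  ⋃ P : V × (Fin (ℓ+1) → I), SsetFn G ρ φ a ℓ P

lemma pword_inj {ℓ : ℕ} {u u' : V} {w w' : Fin (ℓ+1) → I} {z : ℕ → E}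
    (hz : z ∈ cyl (pword G ρ φ ℓ u w)) (hz' : z ∈ cyl (pword G ρ φ ℓ u' w')) :
    u = u' ∧ w = w' := by
  constructor
  · have h1 := congrArg G.s (hz (Fin.last ℓ))
    have h2 := congrArg G.s (hz' (Fin.last ℓ))
    rw [s_pword] at h1 h2
    simp only [Fin.val_last, Nat.sub_self] at h1 h2
    exact h1.symm.trans h2
  · funext j
    have h1 := congrArg φ.toFun (hz (Fin.rev j))
    have h2 := congrArg φ.toFun (hz' (Fin.rev j))
    rw [phi_pword] at h1 h2
    have hj : ℓ - ((Fin.rev j : Fin (ℓ+1)) : ℕ) = (j : ℕ) := by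
      simp [Fin.val_rev]
      omega
    rw [hj, wext_lt w (by omega : (j:ℕ) < ℓ+1)] at h1
    rw [hj, wext_lt w' (by omega : (j:ℕ) < ℓ+1)] at h2
    simp only [Fin.eta] at h1 h2
    exact h1.symm.trans h2

lemma SsetFn_disjoint (a : V) (ℓ : ℕ) :
    Pairwise (Function.onFun Disjoint (SsetFn G ρ φ a ℓ)) := by
  intro P Q hPQ
  rw [Function.onFun, SsetFn, SsetFn]
  split_ifs with h1 h2 h2
  · refine Set.disjoint_left.2 fun z hz hz' => hPQ ?_
    obtain ⟨hu, hw⟩ := pword_inj G ρ φ hz hz'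
    exact Prod.ext hu hw
  all_goals simp

lemma measurableSet_SsetFn (a : V) (ℓ : ℕ) (P : V × (Fin (ℓ+1) → I)) :
    MeasurableSet (SsetFn G ρ φ a ℓ P) := by
  rw [SsetFn]
  split_ifs
  · exact measurableSet_cyl _
  · exact MeasurableSet.empty

lemma measurableSet_Sset (a : V) (ℓ : ℕ) : MeasurableSet (Sset G ρ φ a ℓ) :=
  MeasurableSet.iUnion fun P => measurableSet_SsetFn G ρ φ a ℓ P

lemma m_Sset (p0 : V → ℝ≥0∞) (m : Measure (ℕ → E)) (hm : G.IsMarkovMeasure p0 m)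
    (a : V) (ℓ : ℕ) :
    m (Sset G ρ φ a ℓ) = ∑' u : V, p0 u * Aw G ρ φ a u (ℓ+1) := by
  rw [Sset, measure_iUnion (SsetFn_disjoint G ρ φ a ℓ) (measurableSet_SsetFn G ρ φ a ℓ),
    ENNReal.tsum_prod']
  congr 1
  funext u
  rw [Aw, ← ENNReal.tsum_mul_left]
  congr 1
  funext w
  rw [SsetFn, apply_ite m, measure_empty, m_cyl_pword G ρ φ p0 m hm ℓ u w, mul_ite, mul_zero]
  split_ifs with h
  · rw [mul_comm]
  · rfl

lemma tsum_m_Sset_le (p0 : V → ℝ≥0∞) (m : Measure (ℕ → E)) (hm : G.IsMarkovMeasure p0 m)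
    (hρ1 : ∑' i : I, ρ i = 1) (hp01 : ∑' u : V, p0 u = 1) (a : V) :
    ∑' ℓ, m (Sset G ρ φ a ℓ) ≤ 1 := by
  calc ∑' ℓ, m (Sset G ρ φ a ℓ) = ∑' (ℓ) (u : V), p0 u * Aw G ρ φ a u (ℓ+1) := by
        exact tsum_congr fun ℓ => m_Sset G ρ φ p0 m hm a ℓ
    _ = ∑' (u : V) (ℓ), p0 u * Aw G ρ φ a u (ℓ+1) := ENNReal.tsum_comm
    _ ≤ ∑' u : V, p0 u * 1 := by
        refine ENNReal.tsum_le_tsum fun u => ?_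
        rw [ENNReal.tsum_mul_left]
        refine mul_le_mul_right ?_ _
        calc ∑' ℓ, Aw G ρ φ a u (ℓ+1) ≤ ∑' n, Aw G ρ φ a u n :=
              ENNReal.tsum_comp_le_tsum_of_injective Nat.succ_injective _
          _ ≤ 1 := A_tsum_le G ρ φ hρ1 u a
    _ = 1 := by simpa using hp01

lemma m_limsup_Sset (p0 : V → ℝ≥0∞) (m : Measure (ℕ → E)) (hm : G.IsMarkovMeasure p0 m)
    (hρ1 : ∑' i : I, ρ i = 1) (hp01 : ∑' u : V, p0 u = 1) (a : V) :
    m (Filter.limsup (fun ℓ => Sset G ρ φ a ℓ) Filter.atTop) = 0 :=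
  measure_limsup_atTop_eq_zero
    (lt_of_le_of_lt (tsum_m_Sset_le G ρ φ p0 m hm hρ1 hp01 a) ENNReal.one_lt_top).ne

/-! ### Shift invariance of the Markov measure -/

lemma cases_mk_zero (e : E) {n : ℕ} (g : Fin (n+1) → E) (h : 0 < n+2) :
    (Fin.cases e g : ∀ _ : Fin (n+2), E) ⟨0, h⟩ = e := by simp

lemma cases_mk_succ (e : E) {n : ℕ} (g : Fin (n+1) → E) (j : ℕ) (hj : j+1 < n+2) :
    (Fin.cases e g : ∀ _ : Fin (n+2), E) ⟨j+1, hj⟩ = g ⟨j, by omega⟩ := by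
  have h2 : (⟨j+1, hj⟩ : Fin (n+2)) = Fin.succ ⟨j, by omega⟩ := rfl
  rw [h2]
  exact Fin.cases_succ _

lemma isPathW_cases_iff {n : ℕ} (e : E) (g : Fin (n+1) → E) :
    G.IsPathW (Fin.cases e g : Fin (n+2) → E) ↔ G.s e = G.t (g 0) ∧ G.IsPathW g := by
  constructor
  · intro H
    constructor
    · have h := H 0 (by omega)
      rw [cases_mk_zero, cases_mk_succ] at h
      convert h using 2
      rfl
    · intro k hk
      have h := H (k+1) (by omega)
      rw [cases_mk_succ, cases_mk_succ] at h
      exact h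
  · rintro ⟨h0, hp⟩ k hk
    match k with
    | 0 =>
      rw [cases_mk_zero, cases_mk_succ]
      convert h0 using 2
      rfl
    | (k+1) =>
      rw [cases_mk_succ, cases_mk_succ]
      exact hp k (by omega)

lemma preimage_shift_cyl {n : ℕ} (g : Fin (n+1) → E) :
    shift ⁻¹' cyl g = ⋃ e : E, cyl (Fin.cases e g : Fin (n+2) → E) := by
  ext x
  constructor
  · intro hx
    refine Set.mem_iUnion.2 ⟨x 0, fun k => ?_⟩
    induction k using Fin.cases with
    | zero => simp
    | succ j =>
      have := hx j
      simp only [Fin.cases_succ, Fin.val_succ]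
      exact this
  · intro hx k
    obtain ⟨e, he⟩ := Set.mem_iUnion.1 hx
    have := he k.succ
    simp only [Fin.cases_succ, Fin.val_succ] at this
    exact this

lemma m_shift_preimage_cyl (hG : G.IsStochastic) (p0 : V → ℝ≥0∞) (m : Measure (ℕ → E))
    (hm : G.IsMarkovMeasure p0 m) {n : ℕ} (g : Fin (n+1) → E) :
    m (shift ⁻¹' cyl g) = m (cyl g) := by
  have hdisj : Pairwise (Function.onFun Disjoint
      (fun e : E => cyl (Fin.cases e g : Fin (n+2) → E))) := by
    intro e e' hee
    refine Set.disjoint_left.2 fun z hz hz' => hee ?_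
    have h1 := hz 0
    have h2 := hz' 0
    simp only [Fin.cases_zero, Fin.val_zero] at h1 h2
    exact h1.symm.trans h2
  rw [preimage_shift_cyl, measure_iUnion hdisj (fun e => measurableSet_cyl _)]
  have hterm : ∀ e : E, m (cyl (Fin.cases e g : Fin (n+2) → E)) =
      (if G.s e = G.t (g 0) then G.p e else 0) *
        (if G.IsPathW g then (∏ k, G.p (g k)) * p0 (G.s (g (Fin.last n))) else 0) := by
    intro e
    rw [hm.2 (n+1) _]
    by_cases hp : G.IsPathW (Fin.cases e g : Fin (n+2) → E)
    · rw [if_pos hp]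
      obtain ⟨h0, hg⟩ := (isPathW_cases_iff G e g).1 hp
      rw [if_pos h0, if_pos hg]
      rw [Fin.prod_univ_succ]
      simp only [Fin.cases_zero, Fin.cases_succ]
      rw [show (Fin.last (n+1)) = Fin.succ (Fin.last n) from (Fin.succ_last n).symm,
        Fin.cases_succ]
      ring
    · rw [if_neg hp]
      have hne : ¬(G.s e = G.t (g 0) ∧ G.IsPathW g) :=
        fun hc => hp ((isPathW_cases_iff G e g).2 hc)
      rcases not_and_or.1 hne with h | h
      · rw [if_neg h, zero_mul]
      · rw [if_neg h, mul_zero]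
  rw [tsum_congr hterm, ENNReal.tsum_mul_right]
  have hsum : ∑' e : E, (if G.s e = G.t (g 0) then G.p e else 0) = 1 := by
    rw [← hG.2.1 (G.t (g 0))]
    rw [show (∑' (e : {e : E // G.s e = G.t (g 0)}), G.p e.1)
        = ∑' (e : {e : E | G.s e = G.t (g 0)}), G.p e.1 from rfl]
    rw [tsum_subtype {e : E | G.s e = G.t (g 0)} G.p]
    refine tsum_congr fun e => ?_
    rw [Set.indicator_apply]
    rfl
  rw [hsum, one_mul, hm.2 n g]

lemma shift_measurePreserving (hG : G.IsStochastic) (p0 : V → ℝ≥0∞) (m : Measure (ℕ → E))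
    (hm : G.IsMarkovMeasure p0 m) :
    MeasurePreserving (shift : (ℕ → E) → (ℕ → E)) m m := by
  haveI := hm.1
  refine ⟨shift_measurable, ?_⟩
  haveI : IsProbabilityMeasure (Measure.map (shift : (ℕ → E) → (ℕ → E)) m) :=
    Measure.isProbabilityMeasure_map shift_measurable.aemeasurable
  refine ext_of_generate_finite (Cyls E) seqMS_eq_generateFrom isPiSystem_Cyls ?_ ?_
  · rintro S ⟨n, g, rfl⟩
    rw [Measure.map_apply shift_measurable (measurableSet_cyl g)]
    exact m_shift_preimage_cyl G hG p0 m hm g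
  · simp [measure_univ]

/-! ### The path space has full measure -/

lemma m_pathSet_compl (p0 : V → ℝ≥0∞) (m : Measure (ℕ → E))
    (hm : G.IsMarkovMeasure p0 m) : m G.PathSetᶜ = 0 := by
  have hsub : G.PathSetᶜ ⊆ ⋃ n : ℕ,
      ⋃ g : {g : Fin (n+2) → E // ¬ G.IsPathW g}, cyl g.1 := by
    intro x hx
    rw [Set.mem_compl_iff, PreGraph.PathSet, Set.mem_setOf_eq] at hx
    push_neg at hx
    obtain ⟨n, hn⟩ := hx
    refine Set.mem_iUnion.2 ⟨n, Set.mem_iUnion.2 ⟨⟨fun k => x k, ?_⟩, fun k => rfl⟩⟩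
    intro hP
    exact hn (hP n (by omega))
  refine measure_mono_null hsub (measure_iUnion_null fun n => measure_iUnion_null fun g => ?_)
  rw [hm.2 (n+1) g.1, if_neg g.2]

end Aux3


section Aux4

open MeasureTheory Filter
open scoped ENNReal

variable {E V I : Type} [Countable E] [Countable V] [Countable I] [Nontrivial I]
variable (G : PreGraph E V) (ρ : I → ℝ≥0∞) (φ : GraphHom G (bernoulliGraph ρ))

lemma ae_frequently_returns (hG : G.IsStochastic) (p0 : V → ℝ≥0∞) (m : Measure (ℕ → E))
    (hm : G.IsMarkovMeasure p0 m) :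
    ∀ᵐ x ∂m, ∀ u : V, G.t (x 0) = u → ∃ᶠ n in atTop, G.t (x n) = u := by
  haveI := hm.1
  have hcons := (shift_measurePreserving G hG p0 m hm).conservative
  rw [ae_all_iff]
  intro u
  have hmeas : MeasurableSet {x : ℕ → E | G.t (x 0) = u} := by
    have h : {x : ℕ → E | G.t (x 0) = u} = {x : ℕ → E | x 0 ∈ {e : E | G.t e = u}} := rfl
    rw [h]
    exact measurableSet_coord 0 _
  have h := hcons.ae_mem_imp_frequently_image_mem hmeas.nullMeasurableSet
  filter_upwards [h] with x hx h0
  refine (hx h0).mono fun n hn => ?_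
  have h2 : G.t ((shift^[n] x) 0) = u := hn
  rwa [shift_iterate, Nat.zero_add] at h2

/-- Membership criterion for the bad sets: a coherent companion chain `c` which starts
(at depth `ℓ+1`) at `a`, merges with the chain of `z` exactly at time `0`. -/
lemma mem_Sset (z : ℕ → E) (hz : z ∈ G.PathSet) (a : V) (ℓ : ℕ) (c : ℕ → V)
    (hc : ∀ k, c k = fV G ρ φ (φ.toFun (z k)) (c (k+1)))
    (h0 : c 0 = G.t (z 0))
    (hne : ∀ k, 1 ≤ k → k ≤ ℓ+1 → c k ≠ G.t (z k))
    (ha : c (ℓ+1) = a) :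
    z ∈ Sset G ρ φ a ℓ := by
  set u : V := G.t (z (ℓ+1)) with hu
  set w : Fin (ℓ+1) → I := fun j => φ.toFun (z (ℓ - (j:ℕ))) with hw
  have hσ : ∀ j, (hj : j < ℓ+1) → wext w j = φ.toFun (z (ℓ - j)) := fun j hj => by
    rw [wext_lt w hj]
  have huch : ∀ j, j ≤ ℓ+1 → uchain G ρ φ (wext w) u j = G.t (z (ℓ+1 - j)) := by
    intro j
    induction j with
    | zero =>
      intro _
      show u = G.t (z (ℓ+1-0))
      rw [Nat.sub_zero]
    | succ j ih =>
      intro hj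
      show fV G ρ φ (wext w j) (uchain G ρ φ (wext w) u j) = _
      rw [ih (by omega), hσ j (by omega), show ℓ+1-j = (ℓ-j)+1 by omega,
        ← t_coherent G ρ φ hz (ℓ - j), show ℓ+1-(j+1) = ℓ-j by omega]
  have hach : ∀ j, j ≤ ℓ+1 → uchain G ρ φ (wext w) a j = c (ℓ+1 - j) := by
    intro j
    induction j with
    | zero =>
      intro _
      show a = c (ℓ+1-0)
      rw [Nat.sub_zero, ha]
    | succ j ih =>
      intro hj
      show fV G ρ φ (wext w j) (uchain G ρ φ (wext w) a j) = _
      rw [ih (by omega), hσ j (by omega), show ℓ+1-j = (ℓ-j)+1 by omega, ← hc (ℓ - j),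
        show ℓ+1-(j+1) = ℓ-j by omega]
  have hM : Merge G ρ φ (wext w) u a (ℓ+1) := by
    constructor
    · intro j hj
      rw [huch j (by omega), hach j (by omega)]
      exact fun hcon => hne (ℓ+1-j) (by omega) (by omega) hcon.symm
    · rw [huch (ℓ+1) le_rfl, hach (ℓ+1) le_rfl, Nat.sub_self]
      exact h0.symm
  refine Set.mem_iUnion.2 ⟨(u, w), ?_⟩
  rw [SsetFn, if_pos hM]
  intro k
  have hk := k.isLt
  have h1 : uchain G ρ φ (wext w) u (ℓ - (k:ℕ)) = G.t (z ((k:ℕ)+1)) := by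
    rw [huch (ℓ - (k:ℕ)) (by omega), show ℓ+1-(ℓ-(k:ℕ)) = (k:ℕ)+1 by omega]
  have h2 : wext w (ℓ - (k:ℕ)) = φ.toFun (z (k:ℕ)) := by
    rw [hσ _ (by omega : ℓ - (k:ℕ) < ℓ+1), show ℓ-(ℓ-(k:ℕ)) = (k:ℕ) by omega]
  show z (k:ℕ) = theEdge G ρ φ (uchain G ρ φ (wext w) u (ℓ - (k:ℕ))) (wext w (ℓ - (k:ℕ)))
  rw [h1, h2, ← path_coherent G ρ φ hz (k:ℕ)]

end Aux4


/-- (`ζ⁰_G ∨ δ_φ^{(∞)} = ε`.) There is a full-measure set `F ⊆ X_G`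
such that any two points of `F` whose first edges have the same terminal vertex and
which have the same `φ`-itinerary coincide. -/
theorem stmt5 {E V I : Type} [Countable E] [Countable V] [Countable I] [Nontrivial I]
    (G : PreGraph E V) (hG : G.IsStochastic) (hirr : G.Irreducible)
    (p0 : V → ℝ≥0∞) (hp0 : G.IsStationary p0)
    (m : Measure (ℕ → E)) (hm : G.IsMarkovMeasure p0 m)
    (ρ : I → ℝ≥0∞) (hρ : IsProbVector ρ)
    (φ : GraphHom G (bernoulliGraph ρ)) :
    ∃ F : Set (ℕ → E), F ⊆ G.PathSet ∧ m F = 1 ∧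
      ∀ x ∈ F, ∀ y ∈ F, G.t (x 0) = G.t (y 0) →
        (∀ n : ℕ, φ.toFun (x n) = φ.toFun (y n)) → x = y := by
  classical
  haveI := hm.1
  have hMP : MeasurePreserving (shift : (ℕ → E) → (ℕ → E)) m m :=
    shift_measurePreserving G hG p0 m hm
  set Bad : V → Set (ℕ → E) :=
    fun a => Filter.limsup (fun ℓ => Sset G ρ φ a ℓ) Filter.atTop with hBad
  have hBadNull : ∀ a : V, m (Bad a) = 0 := fun a =>
    m_limsup_Sset G ρ φ p0 m hm hρ.2 hp0.2.1 a
  set Ret : Set (ℕ → E) :=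
    {x : ℕ → E | ∀ u : V, G.t (x 0) = u → ∃ᶠ n in Filter.atTop, G.t (x n) = u} with hRet
  set F : Set (ℕ → E) :=
    G.PathSet ∩ Ret ∩ ⋂ (a : V) (N : ℕ), (shift^[N]) ⁻¹' (Bad a)ᶜ with hF
  refine ⟨F, fun x hx => hx.1.1, ?_, ?_⟩
  · -- m F = 1
    have hcompl : m Fᶜ = 0 := by
      rw [hF, Set.compl_inter, Set.compl_inter]
      refine measure_union_null (measure_union_null ?_ ?_) ?_
      · exact m_pathSet_compl G p0 m hm
      · have h := ae_frequently_returns G hG p0 m hm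
        exact h
      · rw [Set.compl_iInter]
        refine measure_iUnion_null fun a => ?_
        rw [Set.compl_iInter]
        refine measure_iUnion_null fun N => ?_
        rw [← Set.preimage_compl, compl_compl]
        exact ((hMP.iterate N).measure_preimage
          (NullMeasurableSet.of_null (hBadNull a))).trans (hBadNull a)
    have h1 : (1:ℝ≥0∞) ≤ m F := by
      calc (1:ℝ≥0∞) = m Set.univ := measure_univ.symm
        _ = m (F ∪ Fᶜ) := by rw [Set.union_compl_self]
        _ ≤ m F + m Fᶜ := measure_union_le F Fᶜ
        _ = m F := by rw [hcompl, add_zero]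
    exact le_antisymm prob_le_one h1
  · -- uniqueness
    intro x hx y hy h00 hlab
    by_contra hxy
    have hex : ∃ n, x n ≠ y n := by
      by_contra hno
      push_neg at hno
      exact hxy (funext hno)
    obtain ⟨N, hNne, hlt⟩ : ∃ N, x N ≠ y N ∧ ∀ k < N, x k = y k :=
      ⟨Nat.find hex, Nat.find_spec hex, fun k hk => not_not.1 (Nat.find_min hex hk)⟩
    have hxP : x ∈ G.PathSet := hx.1.1
    have hyP : y ∈ G.PathSet := hy.1.1
    have heqvN : G.t (x N) = G.t (y N) := by
      rcases Nat.eq_zero_or_pos N with h | h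
      · rw [h]; exact h00
      · obtain ⟨M, hM⟩ := Nat.exists_eq_succ_of_ne_zero h.ne' 
        have hMN : M < N := by omega
        rw [hM, ← hxP M, ← hyP M, hlt M hMN]
    have hstep : ∀ k, G.t (x (k+1)) = G.t (y (k+1)) → x k = y k := by
      intro k h
      rw [path_coherent G ρ φ hxP k, path_coherent G ρ φ hyP k, h, hlab k]
    have hneq : ∀ j, G.t (x (N+1+j)) ≠ G.t (y (N+1+j)) := by
      intro j
      induction j with
      | zero => exact fun h => hNne (hstep N h)
      | succ j ih => exact fun h => ih (congrArg G.t (hstep (N+1+j) h))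
    set a := G.t (y 0) with hadef
    have hyRet : ∃ᶠ n in Filter.atTop, G.t (y n) = a := hy.1.2 a rfl
    set z := shift^[N] x with hzdef
    have hzBad : z ∉ Bad a := Set.mem_iInter.1 (Set.mem_iInter.1 hx.2 a) N
    apply hzBad
    have hzcoord : ∀ k, z k = x (k + N) := fun k => shift_iterate N x k
    have hzP : z ∈ G.PathSet := by
      intro k
      rw [hzcoord k, hzcoord (k+1), show k+1+N = (k+N)+1 by omega]
      exact hxP (k+N)
    show z ∈ Filter.limsup (fun ℓ => Sset G ρ φ a ℓ) Filter.atTop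
    rw [Filter.limsup_eq_iInf_iSup_of_nat]
    simp only [Set.iInf_eq_iInter, Set.iSup_eq_iUnion, Set.mem_iInter, Set.mem_iUnion]
    intro M
    obtain ⟨n, hnge, hna⟩ := Filter.frequently_atTop.1 hyRet (N + M + 2)
    refine ⟨n - N - 1, ⟨by omega, ?_⟩⟩
    refine mem_Sset G ρ φ z hzP a (n - N - 1) (fun k => G.t (y (N + k))) ?_ ?_ ?_ ?_
    · -- coherence of the companion chain
      intro k
      show G.t (y (N + k)) = fV G ρ φ (φ.toFun (z k)) (G.t (y (N + (k+1))))
      rw [t_coherent G ρ φ hyP (N+k), hzcoord k, show k+N = N+k by omega, hlab (N+k)]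
      rfl
    · -- merge at 0
      show G.t (y (N + 0)) = G.t (z 0)
      rw [hzcoord 0, show 0+N = N by omega, show N+0 = N by omega]
      exact heqvN.symm
    · -- distinct in between
      intro k hk1 hk2
      show G.t (y (N + k)) ≠ G.t (z k)
      rw [hzcoord k]
      have h := hneq (k-1)
      rw [show N+1+(k-1) = N+k by omega] at h
      intro hcon
      rw [show k+N = N+k by omega] at hcon
      exact h hcon.symm
    · -- starts at a
      show G.t (y (N + (n - N - 1 + 1))) = a
      rw [show N + (n - N - 1 + 1) = n by omega]
      exact hna


end OneSidedMarkov
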